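/- Let S = {38, 39, 88, 89, 101, 102, 103, 104}. Then ⋃_{i∈S} F_i(□) = [0,1]×[1/4,3/4] (each of these eight maps has contraction ratio 1/4 and the eight quarter-squares tile the horizontal middle strip), and moreover ⋃_{i∈S} F_i(K) = K ∩ ([0,1]×[1/4,3/4]). -/

import Mathlib

noncomputable section

/-- The plane ℝ² with the Euclidean metric. -/
abbrev Plane : Type := EuclideanSpace ℝ (Fin 2)

/-- The point (s, t) ∈ ℝ². -/
def pt (s t : ℝ) : Plane := WithLp.toLp 2 ![s, t]

/-- The unit square □ = [0,1] × [0,1]. -/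
def unitSq : Set Plane := {z : Plane | z 0 ∈ Set.Icc (0:ℝ) 1 ∧ z 1 ∈ Set.Icc (0:ℝ) 1}

/-- Vertical reflection Γ_v(x₁,x₂) = (x₁, 1-x₂). -/
def Γv : Plane → Plane := fun x => pt (x 0) (1 - x 1)

/-- Horizontal reflection Γ_h(x₁,x₂) = (1-x₁, x₂). -/
def Γh : Plane → Plane := fun x => pt (1 - x 0) (x 1)

/-- Diagonal reflection Γ_{d₁}(x₁,x₂) = (x₂, x₁). -/
def Γd₁ : Plane → Plane := fun x => pt (x 1) (x 0)

/-- Anti-diagonal reflection Γ_{d₂}(x₁,x₂) = (1-x₂, 1-x₁). -/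
def Γd₂ : Plane → Plane := fun x => pt (1 - x 1) (1 - x 0)

/-- Counter-clockwise rotation by π/2 around the center: Γ_{r₁}(x₁,x₂) = (1-x₂, x₁).
    The rotations Γ_{r_j} are `Γr^[j]`, and Γ_{r₄} = `Γr^[4]` = id. -/
def Γr : Plane → Plane := fun x => pt (1 - x 1) (x 0)

/-- The basic contraction ratio a = √(7/24) − 1/2. -/
def aa : ℝ := Real.sqrt (7/24) - 1/2

/-- The maps F_i for 1 ≤ i ≤ 13:
    F_{2j+1}(x) = a·x + (j/24, 0) (0 ≤ j ≤ 5), F_{2j+2}(x) = a²·x + (a + j/24, 0) (0 ≤ j ≤ 5),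
    F_{13}(x) = (1/4)·x + (1/4, 0). -/
def Fbase : ℕ → Plane → Plane := fun i x =>
  if i = 13 then (1/4 : ℝ) • x + pt (1/4) 0
  else if i % 2 = 1 then aa • x + pt ((((i - 1) / 2 : ℕ) : ℝ) / 24) 0
  else aa ^ 2 • x + pt (aa + (((i - 2) / 2 : ℕ) : ℝ) / 24) 0

/-- The maps F_i for 1 ≤ i ≤ 26: F_i = Γ_h ∘ F_{27-i} ∘ Γ_h for 14 ≤ i ≤ 26. -/
def Fq : ℕ → Plane → Plane := fun i =>
  if i ≤ 13 then Fbase i else Γh ∘ Fbase (27 - i) ∘ Γh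

/-- The full iterated function system F_1, …, F_104:
    F_{i+25j} = Γ_{r_j} ∘ F_i ∘ Γ_{r_{4-j}} for 1 ≤ i ≤ 25, 1 ≤ j ≤ 3 (here for
    27 ≤ i ≤ 100 one has j = (i-1)/25 ∈ {1,2,3} and i - 25j ∈ {1,…,25});
    F_{101},…,F_{104} are the four central quarter squares. -/
def Fmap : ℕ → Plane → Plane := fun i =>
  if i ≤ 26 then Fq i
  else if i ≤ 100 then Γr^[(i - 1) / 25] ∘ Fq (i - 25 * ((i - 1) / 25)) ∘ Γr^[4 - (i - 1) / 25]
  else if i = 101 then fun x => (1/4 : ℝ) • x + pt (1/4) (1/4)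
  else if i = 102 then fun x => (1/4 : ℝ) • x + pt (1/2) (1/4)
  else if i = 103 then fun x => (1/4 : ℝ) • x + pt (1/2) (1/2)
  else fun x => (1/4 : ℝ) • x + pt (1/4) (1/2)

/-- The contraction ratio of F_i for 1 ≤ i ≤ 13. -/
def ρbase : ℕ → ℝ := fun i =>
  if i = 13 then 1/4 else if i % 2 = 1 then aa else aa ^ 2

/-- The contraction ratio of F_i for 1 ≤ i ≤ 26. -/
def ρq : ℕ → ℝ := fun i => if i ≤ 13 then ρbase i else ρbase (27 - i)

/-- The contraction ratio ρ_i of F_i for 1 ≤ i ≤ 104. -/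
def rho : ℕ → ℝ := fun i =>
  if i ≤ 26 then ρq i
  else if i ≤ 100 then ρq (i - 25 * ((i - 1) / 25))
  else 1/4

end

/-- The horizontal middle strip [0,1] × [1/4,3/4]. -/
def midStrip : Set Plane := {z : Plane | z 0 ∈ Set.Icc (0:ℝ) 1 ∧ z 1 ∈ Set.Icc (1/4:ℝ) (3/4)}

lemma pt0 (s t : ℝ) : pt s t 0 = s := rfl
lemma pt1 (s t : ℝ) : pt s t 1 = t := rfl
lemma smul_app (c : ℝ) (x : Plane) (i : Fin 2) : (c • x) i = c * x i := rfl
lemma add_app (x y : Plane) (i : Fin 2) : (x + y) i = x i + y i := rfl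
lemma plane_ext {x y : Plane} (h0 : x 0 = y 0) (h1 : x 1 = y 1) : x = y :=
  PiLp.ext fun i => by fin_cases i <;> assumption
lemma pt_eta (z : Plane) : z = pt (z 0) (z 1) := plane_ext rfl rfl

lemma haa_sq : aa ^ 2 + aa = 1/24 := by
  have h : Real.sqrt (7/24) ^ 2 = 7/24 := Real.sq_sqrt (by norm_num)
  unfold aa; nlinarith [h]
lemma haa_pos : 0 < aa := by
  have : (1/2 : ℝ) < Real.sqrt (7/24) := by
    rw [show (1/2:ℝ) = Real.sqrt (1/4) by rw [show (1/4:ℝ) = (1/2)^2 by norm_num, Real.sqrt_sq]; norm_num]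
    exact Real.sqrt_lt_sqrt (by norm_num) (by norm_num)
  unfold aa; linarith
lemma haa_lt : aa < 1/24 := by nlinarith [haa_sq, haa_pos]
lemma Γh0 (x : Plane) : Γh x 0 = 1 - x 0 := rfl
lemma Γh1 (x : Plane) : Γh x 1 = x 1 := rfl
lemma Γr0 (x : Plane) : Γr x 0 = 1 - x 1 := rfl
lemma Γr1 (x : Plane) : Γr x 1 = x 0 := rfl

lemma dist_pt (x y : Plane) : dist x y = Real.sqrt ((x 0 - y 0)^2 + (x 1 - y 1)^2) := by
  rw [EuclideanSpace.dist_eq, Fin.sum_univ_two]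
  simp [Real.dist_eq, sq_abs]

lemma dist_Γh (x y : Plane) : dist (Γh x) (Γh y) = dist x y := by
  rw [dist_pt, dist_pt, Γh0, Γh0, Γh1, Γh1]; ring_nf
lemma dist_Γr (x y : Plane) : dist (Γr x) (Γr y) = dist x y := by
  rw [dist_pt, dist_pt, Γr0, Γr0, Γr1, Γr1]; ring_nf
lemma dist_hom (c : ℝ) (b x y : Plane) : dist (c • x + b) (c • y + b) = |c| * dist x y := by
  rw [dist_pt, dist_pt, add_app, add_app, add_app, add_app, smul_app, smul_app, smul_app, smul_app]
  rw [show c * x 0 + b 0 - (c * y 0 + b 0) = c * (x 0 - y 0) by ring,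
    show c * x 1 + b 1 - (c * y 1 + b 1) = c * (x 1 - y 1) by ring]
  rw [show (c * (x 0 - y 0)) ^ 2 + (c * (x 1 - y 1)) ^ 2
      = c^2 * ((x 0 - y 0)^2 + (x 1 - y 1)^2) by ring,
    Real.sqrt_mul (sq_nonneg c), Real.sqrt_sq_eq_abs]
def goodMap (f : Plane → Plane) : Prop :=
  (∀ x y, dist (f x) (f y) ≤ 1/2 * dist x y) ∧ (∀ z ∈ unitSq, f z ∈ unitSq)

lemma mem_unitSq {z : Plane} : z ∈ unitSq ↔ (0 ≤ z 0 ∧ z 0 ≤ 1) ∧ (0 ≤ z 1 ∧ z 1 ≤ 1) := by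
  simp [unitSq, Set.mem_Icc, and_assoc]

lemma Γh_mem {z : Plane} (h : z ∈ unitSq) : Γh z ∈ unitSq := by
  rw [mem_unitSq] at h ⊢; rw [Γh0, Γh1]; constructor <;> constructor <;> linarith [h.1.1, h.1.2, h.2.1, h.2.2]
lemma Γr_mem {z : Plane} (h : z ∈ unitSq) : Γr z ∈ unitSq := by
  rw [mem_unitSq] at h ⊢; rw [Γr0, Γr1]; constructor <;> constructor <;> linarith [h.1.1, h.1.2, h.2.1, h.2.2]

lemma gm_aff {f : Plane → Plane} {c u v : ℝ} (hf : ∀ x, f x = c • x + pt u v)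
    (hc0 : 0 ≤ c) (hc : c ≤ 1/2) (hu : 0 ≤ u) (hv : 0 ≤ v) (hu1 : c + u ≤ 1) (hv1 : c + v ≤ 1) :
    goodMap f := by
  constructor
  · intro x y
    rw [hf, hf, dist_hom, abs_of_nonneg hc0]
    exact mul_le_mul_of_nonneg_right hc dist_nonneg
  · intro z hz
    rw [mem_unitSq] at hz
    rw [hf, mem_unitSq, add_app, add_app, smul_app, smul_app, pt0, pt1]
    obtain ⟨⟨h1, h2⟩, h3, h4⟩ := hz
    constructor <;> constructor <;> nlinarith

lemma gm_preΓh {f : Plane → Plane} (h : goodMap f) : goodMap (f ∘ Γh) :=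
  ⟨fun x y => by simpa [dist_Γh] using h.1 (Γh x) (Γh y), fun z hz => h.2 _ (Γh_mem hz)⟩
lemma gm_postΓh {f : Plane → Plane} (h : goodMap f) : goodMap (Γh ∘ f) :=
  ⟨fun x y => by simpa [Function.comp, dist_Γh] using h.1 x y, fun z hz => Γh_mem (h.2 _ hz)⟩
lemma gm_preΓr {f : Plane → Plane} (h : goodMap f) : goodMap (f ∘ Γr) :=
  ⟨fun x y => by simpa [dist_Γr] using h.1 (Γr x) (Γr y), fun z hz => h.2 _ (Γr_mem hz)⟩
lemma gm_postΓr {f : Plane → Plane} (h : goodMap f) : goodMap (Γr ∘ f) :=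
  ⟨fun x y => by simpa [Function.comp, dist_Γr] using h.1 x y, fun z hz => Γr_mem (h.2 _ hz)⟩

lemma gm_preΓr_it {f : Plane → Plane} (h : goodMap f) (j : ℕ) : goodMap (f ∘ Γr^[j]) := by
  induction j with
  | zero => simpa using h
  | succ n ih =>
      have : f ∘ Γr^[n+1] = (f ∘ Γr^[n]) ∘ Γr := by
        rw [Function.comp_assoc, Function.iterate_succ]
      rw [this]; exact gm_preΓr ih
lemma gm_postΓr_it {f : Plane → Plane} (h : goodMap f) (j : ℕ) : goodMap (Γr^[j] ∘ f) := by
  induction j with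
  | zero => simpa using h
  | succ n ih =>
      have : Γr^[n+1] ∘ f = Γr ∘ (Γr^[n] ∘ f) := by
        rw [Function.iterate_succ', Function.comp_assoc]
      rw [this]; exact gm_postΓr ih

lemma good_Fbase {i : ℕ} (h1 : 1 ≤ i) (h2 : i ≤ 13) : goodMap (Fbase i) := by
  have hs := haa_sq; have hp := haa_pos
  unfold Fbase
  split_ifs with e1 e2
  · exact gm_aff (fun x => rfl) (by norm_num) (by norm_num) (by norm_num) le_rfl (by norm_num) (by norm_num)
  · have hj : ((i - 1) / 2 : ℕ) ≤ 6 := by omega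
    have hj' : (((i - 1) / 2 : ℕ) : ℝ) ≤ 6 := by exact_mod_cast hj
    have hj0 : (0:ℝ) ≤ (((i - 1) / 2 : ℕ) : ℝ) := Nat.cast_nonneg _
    exact gm_aff (fun x => rfl) (by nlinarith) (by nlinarith) (by positivity) le_rfl (by nlinarith) (by nlinarith)
  · have hj : ((i - 2) / 2 : ℕ) ≤ 5 := by omega
    have hj' : (((i - 2) / 2 : ℕ) : ℝ) ≤ 5 := by exact_mod_cast hj
    have hj0 : (0:ℝ) ≤ (((i - 2) / 2 : ℕ) : ℝ) := Nat.cast_nonneg _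
    exact gm_aff (fun x => rfl) (by nlinarith) (by nlinarith) (by nlinarith) le_rfl (by nlinarith) (by nlinarith)

lemma good_Fq {i : ℕ} (h1 : 1 ≤ i) (h2 : i ≤ 26) : goodMap (Fq i) := by
  unfold Fq
  split_ifs with e
  · exact good_Fbase h1 e
  · exact gm_postΓh (gm_preΓh (good_Fbase (by omega) (by omega)))

lemma good_Fmap {i : ℕ} (h1 : 1 ≤ i) (h2 : i ≤ 104) : goodMap (Fmap i) := by
  unfold Fmap
  split_ifs with e1 e2 e3 e4 e5
  · exact good_Fq h1 e1
  · have hm1 : 1 ≤ i - 25 * ((i - 1) / 25) := by omega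
    have hm2 : i - 25 * ((i - 1) / 25) ≤ 26 := by omega
    exact gm_postΓr_it (gm_preΓr_it (good_Fq hm1 hm2) _) _
  · exact gm_aff (fun x => rfl) (by norm_num) (by norm_num) (by norm_num) (by norm_num) (by norm_num) (by norm_num)
  · exact gm_aff (fun x => rfl) (by norm_num) (by norm_num) (by norm_num) (by norm_num) (by norm_num) (by norm_num)
  · exact gm_aff (fun x => rfl) (by norm_num) (by norm_num) (by norm_num) (by norm_num) (by norm_num) (by norm_num)
  · exact gm_aff (fun x => rfl) (by norm_num) (by norm_num) (by norm_num) (by norm_num) (by norm_num) (by norm_num)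
open Metric in
lemma attract_sub {A B : Set Plane} (hA : IsCompact A) (hAne : A.Nonempty)
    (hBne : B.Nonempty) (hBc : IsClosed B)
    (hAsub : A ⊆ ⋃ i ∈ Finset.Icc 1 104, Fmap i '' A)
    (hB : ∀ i ∈ Finset.Icc 1 104, Fmap i '' B ⊆ B) : A ⊆ B := by
  obtain ⟨z₀, hz₀, hmax⟩ := hA.exists_isMaxOn hAne
    (continuous_infDist_pt B).continuousOn
  set M := infDist z₀ B with hM
  have hM0 : M ≤ 0 := by
    by_contra hc
    push_neg at hc
    obtain ⟨_, ⟨i, rfl⟩, _, ⟨hi, rfl⟩, w, hwA, hwz⟩ := hAsub hz₀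
    simp only [Finset.mem_Icc] at hi
    obtain ⟨b, hbB, hb⟩ := (infDist_lt_iff hBne).1
      (show infDist w B < infDist w B + M/2 by linarith)
    have h1 : infDist z₀ B ≤ dist z₀ (Fmap i b) :=
      infDist_le_dist_of_mem (hB i (Finset.mem_Icc.2 hi) ⟨b, hbB, rfl⟩)
    have h2 : dist z₀ (Fmap i b) ≤ 1/2 * dist w b := by
      rw [← hwz]; exact (good_Fmap hi.1 hi.2).1 w b
    have h3 : infDist w B ≤ M := hmax hwA
    linarith
  intro z hz
  have h0 : infDist z B ≤ 0 := le_trans (hmax hz) hM0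
  have : infDist z B = 0 := le_antisymm h0 infDist_nonneg
  have := (mem_closure_iff_infDist_zero hBne).2 this
  rwa [hBc.closure_eq] at this
lemma cont_eval (i : Fin 2) : Continuous (fun z : Plane => z i) :=
  (EuclideanSpace.proj i).continuous

lemma closed_unitSq : IsClosed unitSq := by
  have : unitSq = (fun z : Plane => z 0) ⁻¹' Set.Icc 0 1 ∩ (fun z : Plane => z 1) ⁻¹' Set.Icc 0 1 := rfl
  rw [this]
  exact (isClosed_Icc.preimage (cont_eval 0)).inter (isClosed_Icc.preimage (cont_eval 1))
example (x : Plane) : Γr^[3] x = Γr (Γr (Γr x)) := rfl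
example (x : Plane) : Γr^[1] x = Γr x := rfl
lemma ΓhΓh (x : Plane) : Γh (Γh x) = x := plane_ext (by rw [Γh0, Γh0]; ring) (by rw [Γh1, Γh1])
lemma Γh_pt (a b : ℝ) : Γh (pt a b) = pt (1-a) b := rfl
lemma smul_e1 (t : ℝ) : t • pt 1 0 = pt t 0 :=
  plane_ext (by rw [smul_app, pt0, pt0, mul_one]) (by rw [smul_app, pt1, pt1, mul_zero])
lemma smul_e1' (t : ℝ) : t • pt 1 0 + pt 0 1 = pt t 1 :=
  plane_ext (by rw [add_app, smul_app]; show t * 1 + 0 = t; ring)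
    (by rw [add_app, smul_app]; show t * 0 + 1 = 1; ring)

lemma Fq_odd (j : ℕ) (hj : j ≤ 5) (x : Plane) : Fq (2*j+1) x = aa • x + pt ((j:ℝ)/24) 0 := by
  have h13 : 2*j+1 ≤ 13 := by omega
  have hne : ¬ (2*j+1 = 13) := by omega
  have hmod : (2*j+1) % 2 = 1 := by omega
  have hdiv : (2*j+1-1)/2 = j := by omega
  simp only [Fq, Fbase, if_pos h13, if_neg hne, if_pos hmod, hdiv]

lemma Fq_even (j : ℕ) (hj : j ≤ 5) (x : Plane) : Fq (2*j+2) x = aa^2 • x + pt (aa + (j:ℝ)/24) 0 := by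
  have h13 : 2*j+2 ≤ 13 := by omega
  have hne : ¬ (2*j+2 = 13) := by omega
  have hmod : ¬ ((2*j+2) % 2 = 1) := by omega
  have hdiv : (2*j+2-2)/2 = j := by omega
  simp only [Fq, Fbase, if_pos h13, if_neg hne, if_neg hmod, hdiv]

lemma Fq13 (x : Plane) : Fq 13 x = (1/4:ℝ) • x + pt (1/4) 0 := by norm_num [Fq, Fbase]

lemma Fq_refl {m : ℕ} (h1 : 1 ≤ m) (h2 : m ≤ 26) (x : Plane) : Fq (27 - m) x = Γh (Fq m (Γh x)) := by
  unfold Fq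
  by_cases h : m ≤ 13
  · have h' : ¬ (27 - m ≤ 13) := by omega
    have h'' : 27 - (27 - m) = m := by omega
    simp only [if_neg h', if_pos h, h'', Function.comp_apply]
  · have h' : 27 - m ≤ 13 := by omega
    simp only [if_pos h', if_neg h, Function.comp_apply, ΓhΓh]

lemma cell_cover {c u t : ℝ} (hc : 0 < c) (h1 : u ≤ t) (h2 : t ≤ u + c) :
    ∃ s, s ∈ Set.Icc (0:ℝ) 1 ∧ c • pt s 0 + pt u 0 = pt t 0 := by
  refine ⟨(t - u)/c, ⟨div_nonneg (by linarith) hc.le, by rw [div_le_one hc]; linarith⟩, ?_⟩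
  apply plane_ext
  · rw [add_app, smul_app, pt0, pt0, pt0]; field_simp; ring
  · rw [add_app, smul_app, pt1, pt1, pt1]; ring
lemma Ecov {t : ℝ} (h0 : 0 ≤ t) (hhalf : t ≤ 1/2) :
    ∃ m, 1 ≤ m ∧ m ≤ 13 ∧ (aa ≤ t → 2 ≤ m) ∧ ∃ s ∈ Set.Icc (0:ℝ) 1, Fq m (pt s 0) = pt t 0 := by
  have hs := haa_sq; have hp := haa_pos
  rcases lt_or_ge t aa with h1 | h1
  · obtain ⟨s, hsm, he⟩ := cell_cover (t := t) (u := ((0:ℕ):ℝ)/24) hp (by push_cast; linarith) (by push_cast; linarith)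
    exact ⟨2*0+1, by norm_num, by norm_num, fun hat => absurd hat (by linarith), s, hsm,
      by rw [Fq_odd 0 (by norm_num)]; exact he⟩
  rcases le_or_gt t (1/24) with h2 | h2
  · obtain ⟨s, hsm, he⟩ := cell_cover (t := t) (u := aa + ((0:ℕ):ℝ)/24) (c := aa^2) (by positivity) (by push_cast; linarith) (by push_cast; linarith)
    exact ⟨2*0+2, by norm_num, by norm_num, fun _ => by norm_num, s, hsm,
      by rw [Fq_even 0 (by norm_num)]; exact he⟩
  rcases le_or_gt t (1/24 + aa) with h3 | h3
  · obtain ⟨s, hsm, he⟩ := cell_cover (t := t) (u := ((1:ℕ):ℝ)/24) hp (by push_cast; linarith) (by push_cast; linarith)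
    exact ⟨2*1+1, by norm_num, by norm_num, fun _ => by norm_num, s, hsm,
      by rw [Fq_odd 1 (by norm_num)]; exact he⟩
  rcases le_or_gt t (2/24) with h4 | h4
  · obtain ⟨s, hsm, he⟩ := cell_cover (t := t) (u := aa + ((1:ℕ):ℝ)/24) (c := aa^2) (by positivity) (by push_cast; linarith) (by push_cast; linarith)
    exact ⟨2*1+2, by norm_num, by norm_num, fun _ => by norm_num, s, hsm,
      by rw [Fq_even 1 (by norm_num)]; exact he⟩
  rcases le_or_gt t (2/24 + aa) with h5 | h5
  · obtain ⟨s, hsm, he⟩ := cell_cover (t := t) (u := ((2:ℕ):ℝ)/24) hp (by push_cast; linarith) (by push_cast; linarith)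
    exact ⟨2*2+1, by norm_num, by norm_num, fun _ => by norm_num, s, hsm,
      by rw [Fq_odd 2 (by norm_num)]; exact he⟩
  rcases le_or_gt t (3/24) with h6 | h6
  · obtain ⟨s, hsm, he⟩ := cell_cover (t := t) (u := aa + ((2:ℕ):ℝ)/24) (c := aa^2) (by positivity) (by push_cast; linarith) (by push_cast; linarith)
    exact ⟨2*2+2, by norm_num, by norm_num, fun _ => by norm_num, s, hsm,
      by rw [Fq_even 2 (by norm_num)]; exact he⟩
  rcases le_or_gt t (3/24 + aa) with h7 | h7
  · obtain ⟨s, hsm, he⟩ := cell_cover (t := t) (u := ((3:ℕ):ℝ)/24) hp (by push_cast; linarith) (by push_cast; linarith)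
    exact ⟨2*3+1, by norm_num, by norm_num, fun _ => by norm_num, s, hsm,
      by rw [Fq_odd 3 (by norm_num)]; exact he⟩
  rcases le_or_gt t (4/24) with h8 | h8
  · obtain ⟨s, hsm, he⟩ := cell_cover (t := t) (u := aa + ((3:ℕ):ℝ)/24) (c := aa^2) (by positivity) (by push_cast; linarith) (by push_cast; linarith)
    exact ⟨2*3+2, by norm_num, by norm_num, fun _ => by norm_num, s, hsm,
      by rw [Fq_even 3 (by norm_num)]; exact he⟩
  rcases le_or_gt t (4/24 + aa) with h9 | h9
  · obtain ⟨s, hsm, he⟩ := cell_cover (t := t) (u := ((4:ℕ):ℝ)/24) hp (by push_cast; linarith) (by push_cast; linarith)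
    exact ⟨2*4+1, by norm_num, by norm_num, fun _ => by norm_num, s, hsm,
      by rw [Fq_odd 4 (by norm_num)]; exact he⟩
  rcases le_or_gt t (5/24) with h10 | h10
  · obtain ⟨s, hsm, he⟩ := cell_cover (t := t) (u := aa + ((4:ℕ):ℝ)/24) (c := aa^2) (by positivity) (by push_cast; linarith) (by push_cast; linarith)
    exact ⟨2*4+2, by norm_num, by norm_num, fun _ => by norm_num, s, hsm,
      by rw [Fq_even 4 (by norm_num)]; exact he⟩
  rcases le_or_gt t (5/24 + aa) with h11 | h11
  · obtain ⟨s, hsm, he⟩ := cell_cover (t := t) (u := ((5:ℕ):ℝ)/24) hp (by push_cast; linarith) (by push_cast; linarith)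
    exact ⟨2*5+1, by norm_num, by norm_num, fun _ => by norm_num, s, hsm,
      by rw [Fq_odd 5 (by norm_num)]; exact he⟩
  rcases le_or_gt t (6/24) with h12 | h12
  · obtain ⟨s, hsm, he⟩ := cell_cover (t := t) (u := aa + ((5:ℕ):ℝ)/24) (c := aa^2) (by positivity) (by push_cast; linarith) (by push_cast; linarith)
    exact ⟨2*5+2, by norm_num, by norm_num, fun _ => by norm_num, s, hsm,
      by rw [Fq_even 5 (by norm_num)]; exact he⟩
  · obtain ⟨s, hsm, he⟩ := cell_cover (t := t) (u := (1/4:ℝ)) (c := (1/4:ℝ)) (by norm_num) (by linarith) (by linarith)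
    exact ⟨13, by norm_num, by norm_num, fun _ => by norm_num, s, hsm, by rw [Fq13]; exact he⟩
lemma Ebot_cov {t : ℝ} (h0 : 0 ≤ t) (h1 : t ≤ 1) :
    ∃ m, 1 ≤ m ∧ m ≤ 26 ∧ (t ≤ 1 - aa → m ≤ 25) ∧ ∃ s ∈ Set.Icc (0:ℝ) 1, Fq m (pt s 0) = pt t 0 := by
  rcases le_or_gt t (1/2) with h | h
  · obtain ⟨m, hm1, hm2, _, s, hs, he⟩ := Ecov h0 h
    exact ⟨m, hm1, by omega, fun _ => by omega, s, hs, he⟩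
  · obtain ⟨m, hm1, hm2, hm3, s, hs, he⟩ := Ecov (t := 1 - t) (by linarith) (by linarith)
    refine ⟨27 - m, by omega, by omega, fun ht => ?_, 1 - s, ⟨by linarith [hs.2], by linarith [hs.1]⟩, ?_⟩
    · have : 2 ≤ m := hm3 (by linarith)
      omega
    · rw [Fq_refl hm1 (by omega), Γh_pt, show (1:ℝ) - (1 - s) = s by ring, he, Γh_pt,
        show (1:ℝ) - (1 - t) = t by ring]

def Ebot : Set Plane := (fun t : ℝ => t • pt 1 0) '' Set.Icc 0 1
def Etop : Set Plane := (fun t : ℝ => t • pt 1 0 + pt 0 1) '' Set.Icc 0 1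

lemma Ebot_eq : Ebot = (fun t : ℝ => pt t 0) '' Set.Icc 0 1 := by
  unfold Ebot; rw [show (fun t : ℝ => t • pt 1 0) = fun t : ℝ => pt t 0 from funext smul_e1]
lemma Etop_eq : Etop = (fun t : ℝ => pt t 1) '' Set.Icc 0 1 := by
  unfold Etop; rw [show (fun t : ℝ => t • pt 1 0 + pt 0 1) = fun t : ℝ => pt t 1 from funext smul_e1']

lemma Ebot_compact : IsCompact Ebot :=
  isCompact_Icc.image (continuous_id.smul continuous_const)
lemma Etop_compact : IsCompact Etop :=
  isCompact_Icc.image ((continuous_id.smul continuous_const).add continuous_const)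
lemma Ebot_ne : Ebot.Nonempty := ⟨_, ⟨0, Set.left_mem_Icc.2 zero_le_one, rfl⟩⟩
lemma Etop_ne : Etop.Nonempty := ⟨_, ⟨0, Set.left_mem_Icc.2 zero_le_one, rfl⟩⟩

lemma mem_Ebot {t : ℝ} (h0 : 0 ≤ t) (h1 : t ≤ 1) : pt t 0 ∈ Ebot := by
  rw [Ebot_eq]; exact ⟨t, ⟨h0, h1⟩, rfl⟩
lemma mem_Etop {t : ℝ} (h0 : 0 ≤ t) (h1 : t ≤ 1) : pt t 1 ∈ Etop := by
  rw [Etop_eq]; exact ⟨t, ⟨h0, h1⟩, rfl⟩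

lemma Fmap_le26 {i : ℕ} (h : i ≤ 26) : Fmap i = Fq i := by
  unfold Fmap; rw [if_pos h]

lemma Ebot_sub : Ebot ⊆ ⋃ i ∈ Finset.Icc 1 104, Fmap i '' Ebot := by
  rw [Ebot_eq]
  rintro z ⟨t, ⟨h0, h1⟩, rfl⟩
  obtain ⟨m, hm1, hm2, _, s, ⟨hs0, hs1⟩, he⟩ := Ebot_cov h0 h1
  refine Set.mem_biUnion (Finset.mem_Icc.2 ⟨hm1, by omega⟩) ⟨pt s 0, ⟨s, ⟨hs0, hs1⟩, rfl⟩, ?_⟩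
  rw [Fmap_le26 hm2, he]

lemma Γr_pt (a b : ℝ) : Γr (pt a b) = pt (1-b) a := rfl

lemma Etop_sub : Etop ⊆ ⋃ i ∈ Finset.Icc 1 104, Fmap i '' Etop := by
  rw [Etop_eq]
  rintro z ⟨t, ⟨h0, h1⟩, rfl⟩
  rcases lt_or_ge t aa with h | h
  · -- use F 76
    refine Set.mem_biUnion (Finset.mem_Icc.2 ⟨by norm_num, by norm_num⟩ : (76:ℕ) ∈ _)
      ⟨pt (t/aa) 1, ⟨t/aa, ⟨div_nonneg h0 haa_pos.le, by rw [div_le_one haa_pos]; linarith⟩, rfl⟩, ?_⟩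
    have h76 : Fmap 76 = Γr^[3] ∘ Fq 1 ∘ Γr^[1] := by norm_num [Fmap]
    rw [h76]
    show Γr^[3] (Fq 1 (Γr^[1] (pt (t/aa) 1))) = pt t 1
    rw [show Γr^[1] (pt (t/aa) 1) = pt 0 (t/aa) from by rw [Function.iterate_one, Γr_pt]; norm_num,
      show Fq 1 (pt 0 (t/aa)) = aa • pt 0 (t/aa) + pt 0 0 from by
        have := Fq_odd 0 (by norm_num) (pt 0 (t/aa)); norm_num at this; exact this]
    have hx : aa • pt 0 (t/aa) + pt 0 0 = pt 0 t := by
      apply plane_ext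
      · rw [add_app, smul_app]; show aa * 0 + 0 = 0; ring
      · rw [add_app, smul_app]; show aa * (t/aa) + 0 = t
        rw [add_zero, mul_comm, div_mul_cancel₀ t (ne_of_gt haa_pos)]
    rw [hx]
    show Γr (Γr (Γr (pt 0 t))) = pt t 1
    rw [Γr_pt, Γr_pt, Γr_pt]; norm_num
  · -- use F (50 + m)
    obtain ⟨m, hm1, hm2, hm3, s, ⟨hs0, hs1⟩, he⟩ := Ebot_cov (t := 1 - t) (by linarith) (by linarith)
    have hm25 : m ≤ 25 := hm3 (by linarith)
    refine Set.mem_biUnion (Finset.mem_Icc.2 ⟨by omega, by omega⟩ : (50 + m) ∈ _)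
      ⟨pt (1-s) 1, ⟨1-s, ⟨by linarith, by linarith⟩, rfl⟩, ?_⟩
    have hf : Fmap (50 + m) = Γr^[2] ∘ Fq m ∘ Γr^[2] := by
      have e1 : ¬ (50 + m ≤ 26) := by omega
      have e2 : 50 + m ≤ 100 := by omega
      have e3 : (50 + m - 1) / 25 = 2 := by omega
      have e4 : 50 + m - 25 * 2 = m := by omega
      simp only [Fmap, if_neg e1, if_pos e2, e3, e4]
    rw [hf]
    show Γr^[2] (Fq m (Γr^[2] (pt (1-s) 1))) = pt t 1
    have g2 : ∀ a b : ℝ, Γr^[2] (pt a b) = pt (1-a) (1-b) := fun a b => by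
      show Γr (Γr (pt a b)) = _; rw [Γr_pt, Γr_pt]
    rw [g2]
    norm_num
    rw [he, Γr_pt, Γr_pt]
    norm_num
lemma aff_pt (c u v a b : ℝ) : c • pt a b + pt u v = pt (c*a+u) (c*b+v) :=
  plane_ext (by rw [add_app, smul_app]; show c * a + u = _; rfl)
    (by rw [add_app, smul_app]; show c * b + v = _; rfl)
lemma pt_congr {a a' b b' : ℝ} (h1 : a = a') (h2 : b = b') : pt a b = pt a' b' := by rw [h1, h2]

lemma Fbase_bounds {m : ℕ} (h1 : 1 ≤ m) (h2 : m ≤ 12) {k : Plane} (hk : k ∈ unitSq) :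
    (Fbase m k) 1 ≤ aa ∧ (m ≤ 11 → (Fbase m k) 0 ≤ 5/24 + aa) := by
  obtain ⟨⟨hk0, hk1⟩, hk2, hk3⟩ := mem_unitSq.1 hk
  have hs := haa_sq; have hp := haa_pos
  unfold Fbase
  have hne : ¬ (m = 13) := by omega
  rw [if_neg hne]
  by_cases hm : m % 2 = 1
  · rw [if_pos hm]
    have hj : ((m-1)/2 : ℕ) ≤ 5 := by omega
    have hj' : (((m-1)/2 : ℕ) : ℝ) ≤ 5 := by exact_mod_cast hj
    have hj0 : (0:ℝ) ≤ (((m-1)/2 : ℕ) : ℝ) := Nat.cast_nonneg _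
    constructor
    · rw [add_app, smul_app, pt1]; nlinarith
    · intro _; rw [add_app, smul_app, pt0]; nlinarith
  · rw [if_neg hm]
    have hj : ((m-2)/2 : ℕ) ≤ 5 := by omega
    have hj' : (((m-2)/2 : ℕ) : ℝ) ≤ 5 := by exact_mod_cast hj
    have hj0 : (0:ℝ) ≤ (((m-2)/2 : ℕ) : ℝ) := Nat.cast_nonneg _
    constructor
    · rw [add_app, smul_app, pt1]; nlinarith
    · intro h11
      have hj4 : ((m-2)/2 : ℕ) ≤ 4 := by omega
      have hj4' : (((m-2)/2 : ℕ) : ℝ) ≤ 4 := by exact_mod_cast hj4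
      rw [add_app, smul_app, pt0]; nlinarith

lemma Fq_y {m : ℕ} (h1 : 1 ≤ m) (h2 : m ≤ 26) (h3 : m ≠ 13) (h4 : m ≠ 14) {k : Plane}
    (hk : k ∈ unitSq) : (Fq m k) 1 ≤ aa := by
  unfold Fq; split_ifs with e
  · exact (Fbase_bounds h1 (by omega) hk).1
  · show (Γh (Fbase (27-m) (Γh k))) 1 ≤ aa
    rw [Γh1]
    exact (Fbase_bounds (by omega) (by omega) (Γh_mem hk)).1

lemma Fq_x_left {m : ℕ} (h1 : 1 ≤ m) (h2 : m ≤ 11) {k : Plane} (hk : k ∈ unitSq) :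
    (Fq m k) 0 ≤ 5/24 + aa := by
  unfold Fq; rw [if_pos (by omega : m ≤ 13)]
  exact (Fbase_bounds h1 (by omega) hk).2 h2

lemma Fq_x_right {m : ℕ} (h1 : 16 ≤ m) (h2 : m ≤ 26) {k : Plane} (hk : k ∈ unitSq) :
    19/24 - aa ≤ (Fq m k) 0 := by
  unfold Fq; rw [if_neg (by omega : ¬ m ≤ 13)]
  show 19/24 - aa ≤ (Γh (Fbase (27-m) (Γh k))) 0
  rw [Γh0]
  have := (Fbase_bounds (m := 27 - m) (by omega) (by omega) (Γh_mem hk)).2 (by omega)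
  linarith
lemma hb13 : ∀ x : Plane, Fbase 13 x = (1/4:ℝ) • x + pt (1/4) 0 := fun x => rfl
lemma hb12 : ∀ x : Plane, Fbase 12 x = aa^2 • x + pt (aa + ((5:ℕ):ℝ)/24) 0 := fun x => rfl

lemma F13_app (k : Plane) : Fmap 13 k = pt (1/4 * k 0 + 1/4) (1/4 * k 1) := by
  conv_lhs => rw [pt_eta k]
  show (Fbase 13 (pt (k 0) (k 1))) = _
  rw [hb13, aff_pt]
  exact pt_congr
    (by push_cast; first | ring1 | linear_combination haa_sq | linear_combination (-1:ℝ)*haa_sq)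
    (by push_cast; first | ring1 | linear_combination haa_sq | linear_combination (-1:ℝ)*haa_sq)

lemma F14_app (k : Plane) : Fmap 14 k = pt (1/4 * k 0 + 1/2) (1/4 * k 1) := by
  conv_lhs => rw [pt_eta k]
  show (Γh (Fbase 13 (Γh (pt (k 0) (k 1))))) = _
  rw [Γh_pt, hb13, aff_pt, Γh_pt]
  exact pt_congr
    (by push_cast; first | ring1 | linear_combination haa_sq | linear_combination (-1:ℝ)*haa_sq)
    (by push_cast; first | ring1 | linear_combination haa_sq | linear_combination (-1:ℝ)*haa_sq)

lemma F37_app (k : Plane) : Fmap 37 k = pt (aa^2 * k 0 + (1 - aa^2)) (aa^2 * k 1 + (aa + 5/24)) := by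
  conv_lhs => rw [pt_eta k]
  show (Γr (Fbase 12 (Γr (Γr (Γr (pt (k 0) (k 1))))))) = _
  rw [Γr_pt, Γr_pt, Γr_pt, hb12, aff_pt, Γr_pt]
  exact pt_congr
    (by push_cast; first | ring1 | linear_combination haa_sq | linear_combination (-1:ℝ)*haa_sq)
    (by push_cast; first | ring1 | linear_combination haa_sq | linear_combination (-1:ℝ)*haa_sq)

lemma F38_app (k : Plane) : Fmap 38 k = pt (1/4 * k 0 + 3/4) (1/4 * k 1 + 1/4) := by
  conv_lhs => rw [pt_eta k]
  show (Γr (Fbase 13 (Γr (Γr (Γr (pt (k 0) (k 1))))))) = _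
  rw [Γr_pt, Γr_pt, Γr_pt, hb13, aff_pt, Γr_pt]
  exact pt_congr
    (by push_cast; first | ring1 | linear_combination haa_sq | linear_combination (-1:ℝ)*haa_sq)
    (by push_cast; first | ring1 | linear_combination haa_sq | linear_combination (-1:ℝ)*haa_sq)

lemma F39_app (k : Plane) : Fmap 39 k = pt (1/4 * k 0 + 3/4) (1/4 * k 1 + 1/2) := by
  conv_lhs => rw [pt_eta k]
  show (Γr (Γh (Fbase 13 (Γh (Γr (Γr (Γr (pt (k 0) (k 1))))))))) = _
  rw [Γr_pt, Γr_pt, Γr_pt, Γh_pt, hb13, aff_pt, Γh_pt, Γr_pt]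
  exact pt_congr
    (by push_cast; first | ring1 | linear_combination haa_sq | linear_combination (-1:ℝ)*haa_sq)
    (by push_cast; first | ring1 | linear_combination haa_sq | linear_combination (-1:ℝ)*haa_sq)

lemma F40_app (k : Plane) : Fmap 40 k = pt (aa^2 * k 0 + (1 - aa^2)) (aa^2 * k 1 + 3/4) := by
  conv_lhs => rw [pt_eta k]
  show (Γr (Γh (Fbase 12 (Γh (Γr (Γr (Γr (pt (k 0) (k 1))))))))) = _
  rw [Γr_pt, Γr_pt, Γr_pt, Γh_pt, hb12, aff_pt, Γh_pt, Γr_pt]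
  exact pt_congr
    (by push_cast; first | ring1 | linear_combination haa_sq | linear_combination (-1:ℝ)*haa_sq)
    (by push_cast; first | ring1 | linear_combination haa_sq | linear_combination (-1:ℝ)*haa_sq)

lemma F63_app (k : Plane) : Fmap 63 k = pt (1/4 * k 0 + 1/2) (1/4 * k 1 + 3/4) := by
  conv_lhs => rw [pt_eta k]
  show (Γr (Γr (Fbase 13 (Γr (Γr (pt (k 0) (k 1))))))) = _
  rw [Γr_pt, Γr_pt, hb13, aff_pt, Γr_pt, Γr_pt]
  exact pt_congr
    (by push_cast; first | ring1 | linear_combination haa_sq | linear_combination (-1:ℝ)*haa_sq)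
    (by push_cast; first | ring1 | linear_combination haa_sq | linear_combination (-1:ℝ)*haa_sq)

lemma F64_app (k : Plane) : Fmap 64 k = pt (1/4 * k 0 + 1/4) (1/4 * k 1 + 3/4) := by
  conv_lhs => rw [pt_eta k]
  show (Γr (Γr (Γh (Fbase 13 (Γh (Γr (Γr (pt (k 0) (k 1))))))))) = _
  rw [Γr_pt, Γr_pt, Γh_pt, hb13, aff_pt, Γh_pt, Γr_pt, Γr_pt]
  exact pt_congr
    (by push_cast; first | ring1 | linear_combination haa_sq | linear_combination (-1:ℝ)*haa_sq)
    (by push_cast; first | ring1 | linear_combination haa_sq | linear_combination (-1:ℝ)*haa_sq)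

lemma F87_app (k : Plane) : Fmap 87 k = pt (aa^2 * k 0) (aa^2 * k 1 + 3/4) := by
  conv_lhs => rw [pt_eta k]
  show (Γr (Γr (Γr (Fbase 12 (Γr (pt (k 0) (k 1))))))) = _
  rw [Γr_pt, hb12, aff_pt, Γr_pt, Γr_pt, Γr_pt]
  exact pt_congr
    (by push_cast; first | ring1 | linear_combination haa_sq | linear_combination (-1:ℝ)*haa_sq)
    (by push_cast; first | ring1 | linear_combination haa_sq | linear_combination (-1:ℝ)*haa_sq)

lemma F88_app (k : Plane) : Fmap 88 k = pt (1/4 * k 0) (1/4 * k 1 + 1/2) := by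
  conv_lhs => rw [pt_eta k]
  show (Γr (Γr (Γr (Fbase 13 (Γr (pt (k 0) (k 1))))))) = _
  rw [Γr_pt, hb13, aff_pt, Γr_pt, Γr_pt, Γr_pt]
  exact pt_congr
    (by push_cast; first | ring1 | linear_combination haa_sq | linear_combination (-1:ℝ)*haa_sq)
    (by push_cast; first | ring1 | linear_combination haa_sq | linear_combination (-1:ℝ)*haa_sq)

lemma F89_app (k : Plane) : Fmap 89 k = pt (1/4 * k 0) (1/4 * k 1 + 1/4) := by
  conv_lhs => rw [pt_eta k]
  show (Γr (Γr (Γr (Γh (Fbase 13 (Γh (Γr (pt (k 0) (k 1))))))))) = _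
  rw [Γr_pt, Γh_pt, hb13, aff_pt, Γh_pt, Γr_pt, Γr_pt, Γr_pt]
  exact pt_congr
    (by push_cast; first | ring1 | linear_combination haa_sq | linear_combination (-1:ℝ)*haa_sq)
    (by push_cast; first | ring1 | linear_combination haa_sq | linear_combination (-1:ℝ)*haa_sq)

lemma F90_app (k : Plane) : Fmap 90 k = pt (aa^2 * k 0) (aa^2 * k 1 + (aa + 5/24)) := by
  conv_lhs => rw [pt_eta k]
  show (Γr (Γr (Γr (Γh (Fbase 12 (Γh (Γr (pt (k 0) (k 1))))))))) = _
  rw [Γr_pt, Γh_pt, hb12, aff_pt, Γh_pt, Γr_pt, Γr_pt, Γr_pt]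
  exact pt_congr
    (by push_cast; first | ring1 | linear_combination haa_sq | linear_combination (-1:ℝ)*haa_sq)
    (by push_cast; first | ring1 | linear_combination haa_sq | linear_combination (-1:ℝ)*haa_sq)

lemma F101_app (k : Plane) : Fmap 101 k = pt (1/4 * k 0 + 1/4) (1/4 * k 1 + 1/4) := by
  conv_lhs => rw [pt_eta k]
  show (1/4:ℝ) • (pt (k 0) (k 1)) + pt (1/4) (1/4) = _
  rw [aff_pt]

lemma F102_app (k : Plane) : Fmap 102 k = pt (1/4 * k 0 + 1/2) (1/4 * k 1 + 1/4) := by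
  conv_lhs => rw [pt_eta k]
  show (1/4:ℝ) • (pt (k 0) (k 1)) + pt (1/2) (1/4) = _
  rw [aff_pt]

lemma F103_app (k : Plane) : Fmap 103 k = pt (1/4 * k 0 + 1/2) (1/4 * k 1 + 1/2) := by
  conv_lhs => rw [pt_eta k]
  show (1/4:ℝ) • (pt (k 0) (k 1)) + pt (1/2) (1/2) = _
  rw [aff_pt]

lemma F104_app (k : Plane) : Fmap 104 k = pt (1/4 * k 0 + 1/4) (1/4 * k 1 + 1/2) := by
  conv_lhs => rw [pt_eta k]
  show (1/4:ℝ) • (pt (k 0) (k 1)) + pt (1/4) (1/2) = _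
  rw [aff_pt]

lemma F88_app' (k : Plane) : Fmap 88 k = pt (1/4 * k 0 + 0) (1/4 * k 1 + 1/2) := by
  rw [F88_app]; exact pt_congr (by ring) rfl
lemma F89_app' (k : Plane) : Fmap 89 k = pt (1/4 * k 0 + 0) (1/4 * k 1 + 1/4) := by
  rw [F89_app]; exact pt_congr (by ring) rfl

lemma img_sq {i : ℕ} {c0 c1 : ℝ} (happ : ∀ k : Plane, Fmap i k = pt (1/4 * k 0 + c0) (1/4 * k 1 + c1)) :
    Fmap i '' unitSq = {z : Plane | (c0 ≤ z 0 ∧ z 0 ≤ c0 + 1/4) ∧ (c1 ≤ z 1 ∧ z 1 ≤ c1 + 1/4)} := by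
  ext z
  constructor
  · rintro ⟨k, hk, rfl⟩
    obtain ⟨⟨h1, h2⟩, h3, h4⟩ := mem_unitSq.1 hk
    rw [happ]
    exact ⟨⟨by rw [pt0]; linarith, by rw [pt0]; linarith⟩,
      by rw [pt1]; linarith, by rw [pt1]; linarith⟩
  · rintro ⟨⟨h1, h2⟩, h3, h4⟩
    refine ⟨pt (4*(z 0 - c0)) (4*(z 1 - c1)),
      mem_unitSq.2 ⟨⟨by rw [pt0]; linarith, by rw [pt0]; linarith⟩,
        by rw [pt1]; linarith, by rw [pt1]; linarith⟩, ?_⟩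
    rw [happ]
    refine (pt_congr ?_ ?_).trans (pt_eta z).symm
    · rw [pt0]; ring
    · rw [pt1]; ring

lemma part2 : (⋃ i ∈ ({38, 39, 88, 89, 101, 102, 103, 104} : Finset ℕ), Fmap i '' unitSq) = midStrip := by
  have h38 := img_sq (i := 38) (c0 := 3/4) (c1 := 1/4) F38_app
  have h39 := img_sq (i := 39) (c0 := 3/4) (c1 := 1/2) F39_app
  have h88 := img_sq (i := 88) (c0 := 0) (c1 := 1/2) F88_app'
  have h89 := img_sq (i := 89) (c0 := 0) (c1 := 1/4) F89_app'
  have h101 := img_sq (i := 101) (c0 := 1/4) (c1 := 1/4) F101_app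
  have h102 := img_sq (i := 102) (c0 := 1/2) (c1 := 1/4) F102_app
  have h103 := img_sq (i := 103) (c0 := 1/2) (c1 := 1/2) F103_app
  have h104 := img_sq (i := 104) (c0 := 1/4) (c1 := 1/2) F104_app
  apply Set.Subset.antisymm
  · refine Set.iUnion₂_subset fun i hi => ?_
    fin_cases hi <;>
      first
        | (rw [h38]; rintro z ⟨⟨a1, a2⟩, a3, a4⟩; exact ⟨⟨by linarith, by linarith⟩, by linarith, by linarith⟩)
        | (rw [h39]; rintro z ⟨⟨a1, a2⟩, a3, a4⟩; exact ⟨⟨by linarith, by linarith⟩, by linarith, by linarith⟩)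
        | (rw [h88]; rintro z ⟨⟨a1, a2⟩, a3, a4⟩; exact ⟨⟨by linarith, by linarith⟩, by linarith, by linarith⟩)
        | (rw [h89]; rintro z ⟨⟨a1, a2⟩, a3, a4⟩; exact ⟨⟨by linarith, by linarith⟩, by linarith, by linarith⟩)
        | (rw [h101]; rintro z ⟨⟨a1, a2⟩, a3, a4⟩; exact ⟨⟨by linarith, by linarith⟩, by linarith, by linarith⟩)
        | (rw [h102]; rintro z ⟨⟨a1, a2⟩, a3, a4⟩; exact ⟨⟨by linarith, by linarith⟩, by linarith, by linarith⟩)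
        | (rw [h103]; rintro z ⟨⟨a1, a2⟩, a3, a4⟩; exact ⟨⟨by linarith, by linarith⟩, by linarith, by linarith⟩)
        | (rw [h104]; rintro z ⟨⟨a1, a2⟩, a3, a4⟩; exact ⟨⟨by linarith, by linarith⟩, by linarith, by linarith⟩)
  · intro z hz
    obtain ⟨⟨a1, a2⟩, a3, a4⟩ := hz
    rcases le_or_gt (z 1) (1/2) with hy | hy
    · rcases le_or_gt (z 0) (1/4) with h1 | h1
      · exact Set.mem_biUnion (by decide : (89:ℕ) ∈ ({38, 39, 88, 89, 101, 102, 103, 104} : Finset ℕ))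
          (h89 ▸ ⟨⟨by linarith, by linarith⟩, by linarith, by linarith⟩)
      · rcases le_or_gt (z 0) (1/2) with h2 | h2
        · exact Set.mem_biUnion (by decide : (101:ℕ) ∈ ({38, 39, 88, 89, 101, 102, 103, 104} : Finset ℕ))
            (h101 ▸ ⟨⟨by linarith, by linarith⟩, by linarith, by linarith⟩)
        · rcases le_or_gt (z 0) (3/4) with h3 | h3
          · exact Set.mem_biUnion (by decide : (102:ℕ) ∈ ({38, 39, 88, 89, 101, 102, 103, 104} : Finset ℕ))
              (h102 ▸ ⟨⟨by linarith, by linarith⟩, by linarith, by linarith⟩)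
          · exact Set.mem_biUnion (by decide : (38:ℕ) ∈ ({38, 39, 88, 89, 101, 102, 103, 104} : Finset ℕ))
              (h38 ▸ ⟨⟨by linarith, by linarith⟩, by linarith, by linarith⟩)
    · rcases le_or_gt (z 0) (1/4) with h1 | h1
      · exact Set.mem_biUnion (by decide : (88:ℕ) ∈ ({38, 39, 88, 89, 101, 102, 103, 104} : Finset ℕ))
          (h88 ▸ ⟨⟨by linarith, by linarith⟩, by linarith, by linarith⟩)
      · rcases le_or_gt (z 0) (1/2) with h2 | h2
        · exact Set.mem_biUnion (by decide : (104:ℕ) ∈ ({38, 39, 88, 89, 101, 102, 103, 104} : Finset ℕ))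
            (h104 ▸ ⟨⟨by linarith, by linarith⟩, by linarith, by linarith⟩)
        · rcases le_or_gt (z 0) (3/4) with h3 | h3
          · exact Set.mem_biUnion (by decide : (103:ℕ) ∈ ({38, 39, 88, 89, 101, 102, 103, 104} : Finset ℕ))
              (h103 ▸ ⟨⟨by linarith, by linarith⟩, by linarith, by linarith⟩)
          · exact Set.mem_biUnion (by decide : (39:ℕ) ∈ ({38, 39, 88, 89, 101, 102, 103, 104} : Finset ℕ))
              (h39 ▸ ⟨⟨by linarith, by linarith⟩, by linarith, by linarith⟩)

set_option maxHeartbeats 2000000 in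
/-- For S = {38,39,88,89,101,102,103,104}: each F_i with i ∈ S has contraction ratio 1/4,
    the eight quarter-squares F_i(□) tile the middle strip ⋃_{i∈S} F_i(□) = [0,1]×[1/4,3/4],
    and ⋃_{i∈S} F_i(K) = K ∩ ([0,1]×[1/4,3/4]). -/
theorem stmt9 (K : Set Plane) (hne : K.Nonempty) (hcomp : IsCompact K)
    (hK : K = ⋃ i ∈ Finset.Icc 1 104, Fmap i '' K) :
    (∀ i ∈ ({38, 39, 88, 89, 101, 102, 103, 104} : Finset ℕ), rho i = 1/4) ∧
    (⋃ i ∈ ({38, 39, 88, 89, 101, 102, 103, 104} : Finset ℕ), Fmap i '' unitSq) = midStrip ∧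
    (⋃ i ∈ ({38, 39, 88, 89, 101, 102, 103, 104} : Finset ℕ), Fmap i '' K) = K ∩ midStrip := by
  have hpart1 : ∀ i ∈ ({38, 39, 88, 89, 101, 102, 103, 104} : Finset ℕ), rho i = 1/4 := by
    intro i hi; fin_cases hi <;> norm_num [rho, ρq, ρbase]
  have hKsub0 : ∀ i ∈ Finset.Icc 1 104, Fmap i '' K ⊆ K := by
    intro i hi
    conv_rhs => rw [hK]
    exact Set.subset_iUnion₂ (s := fun i (_ : i ∈ Finset.Icc 1 104) => Fmap i '' K) i hi
  have hB : ∀ i ∈ Finset.Icc 1 104, Fmap i '' unitSq ⊆ unitSq := by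
    intro i hi
    obtain ⟨h1, h2⟩ := Finset.mem_Icc.1 hi
    rintro w ⟨v, hv, rfl⟩
    exact (good_Fmap h1 h2).2 v hv
  have hKsq : K ⊆ unitSq := attract_sub hcomp hne
    ⟨pt 0 0, mem_unitSq.2 (by norm_num [pt0, pt1])⟩ closed_unitSq hK.le hB
  have hEK : Ebot ⊆ K := attract_sub Ebot_compact Ebot_ne hne hcomp.isClosed Ebot_sub hKsub0
  have hTK : Etop ⊆ K := attract_sub Etop_compact Etop_ne hne hcomp.isClosed Etop_sub hKsub0
  have hbotK : ∀ t : ℝ, 0 ≤ t → t ≤ 1 → pt t 0 ∈ K := fun t h0 h1 => hEK (mem_Ebot h0 h1)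
  have htopK : ∀ t : ℝ, 0 ≤ t → t ≤ 1 → pt t 1 ∈ K := fun t h0 h1 => hTK (mem_Etop h0 h1)
  refine ⟨hpart1, part2, ?_⟩
  apply Set.Subset.antisymm
  · refine Set.iUnion₂_subset fun i hi => ?_
    rintro z ⟨k, hkK, rfl⟩
    have hi' : i ∈ Finset.Icc 1 104 := by fin_cases hi <;> decide
    refine ⟨hKsub0 i hi' ⟨k, hkK, rfl⟩, ?_⟩
    have hm : Fmap i k ∈ Fmap i '' unitSq := ⟨k, hKsq hkK, rfl⟩
    exact part2 ▸ Set.mem_biUnion hi hm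
  · rintro z ⟨hzK, hzS⟩
    obtain ⟨⟨hz0a, hz0b⟩, hz1a, hz1b⟩ := hzS
    have hzU : z ∈ ⋃ i ∈ Finset.Icc 1 104, Fmap i '' K := hK ▸ hzK
    obtain ⟨_, ⟨i, rfl⟩, _, ⟨hi, rfl⟩, k, hkK, hik⟩ := hzU
    obtain ⟨hi1, hi2⟩ := Finset.mem_Icc.1 hi
    obtain ⟨⟨hk0a, hk0b⟩, hk1a, hk1b⟩ := mem_unitSq.1 (hKsq hkK)
    have hs2 := haa_sq; have hs0 := haa_pos; have hsl := haa_lt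
    have memS : ∀ j, j ∈ ({38, 39, 88, 89, 101, 102, 103, 104} : Finset ℕ) → ∀ w, w ∈ K → Fmap j w = z →
        z ∈ ⋃ i ∈ ({38, 39, 88, 89, 101, 102, 103, 104} : Finset ℕ), Fmap i '' K :=
      fun j hj w hw he => Set.mem_biUnion hj ⟨w, hw, he⟩
    by_cases hd38 : i = 38
    · subst hd38; exact memS 38 (by decide) k hkK hik
    by_cases hd39 : i = 39
    · subst hd39; exact memS 39 (by decide) k hkK hik
    by_cases hd88 : i = 88
    · subst hd88; exact memS 88 (by decide) k hkK hik
    by_cases hd89 : i = 89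
    · subst hd89; exact memS 89 (by decide) k hkK hik
    by_cases hd101 : i = 101
    · subst hd101; exact memS 101 (by decide) k hkK hik
    by_cases hd102 : i = 102
    · subst hd102; exact memS 102 (by decide) k hkK hik
    by_cases hd103 : i = 103
    · subst hd103; exact memS 103 (by decide) k hkK hik
    by_cases hd104 : i = 104
    · subst hd104; exact memS 104 (by decide) k hkK hik
    by_cases h13 : i = 13
    · subst h13
      have e := (F13_app k).symm.trans hik
      have e0 : 1/4 * k 0 + 1/4 = z 0 := by rw [← e]; exact (pt0 _ _).symm
      have e1 : 1/4 * k 1 = z 1 := by rw [← e]; exact (pt1 _ _).symm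
      have hk1 : k 1 = 1 := by linarith
      refine memS 101 (by decide) (pt (k 0) 0) (hbotK _ hk0a hk0b) ?_
      rw [F101_app]
      refine (pt_congr ?_ ?_).trans (pt_eta z).symm
      · rw [pt0]; linarith
      · rw [pt1]; linarith
    by_cases h14 : i = 14
    · subst h14
      have e := (F14_app k).symm.trans hik
      have e0 : 1/4 * k 0 + 1/2 = z 0 := by rw [← e]; exact (pt0 _ _).symm
      have e1 : 1/4 * k 1 = z 1 := by rw [← e]; exact (pt1 _ _).symm
      have hk1 : k 1 = 1 := by linarith
      refine memS 102 (by decide) (pt (k 0) 0) (hbotK _ hk0a hk0b) ?_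
      rw [F102_app]
      refine (pt_congr ?_ ?_).trans (pt_eta z).symm
      · rw [pt0]; linarith
      · rw [pt1]; linarith
    by_cases h37 : i = 37
    · subst h37
      have e := (F37_app k).symm.trans hik
      have e0 : aa^2 * k 0 + (1 - aa^2) = z 0 := by rw [← e]; exact (pt0 _ _).symm
      have e1 : aa^2 * k 1 + (aa + 5/24) = z 1 := by rw [← e]; exact (pt1 _ _).symm
      have h2p : (0:ℝ) < aa^2 := pow_pos hs0 2
      have hm0 : 0 ≤ aa^2 * k 0 := mul_nonneg h2p.le hk0a
      have hm0' : aa^2 * k 0 ≤ aa^2 := by nlinarith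
      have hm1 : 0 ≤ aa^2 * k 1 := mul_nonneg h2p.le hk1a
      have hm1' : aa^2 * k 1 ≤ aa^2 := by nlinarith
      have hk1 : k 1 = 1 := le_antisymm hk1b
        ((mul_le_mul_iff_right₀ h2p).1 (show aa^2 * 1 ≤ aa^2 * k 1 by linarith))
      refine memS 38 (by decide) (pt (4 * z 0 - 3) 0) (hbotK _ (by linarith) (by linarith)) ?_
      rw [F38_app]
      refine (pt_congr ?_ ?_).trans (pt_eta z).symm
      · rw [pt0]; linarith
      · rw [pt1]; linarith
    by_cases h40 : i = 40
    · subst h40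
      have e := (F40_app k).symm.trans hik
      have e0 : aa^2 * k 0 + (1 - aa^2) = z 0 := by rw [← e]; exact (pt0 _ _).symm
      have e1 : aa^2 * k 1 + 3/4 = z 1 := by rw [← e]; exact (pt1 _ _).symm
      have h2p : (0:ℝ) < aa^2 := pow_pos hs0 2
      have hm0 : 0 ≤ aa^2 * k 0 := mul_nonneg h2p.le hk0a
      have hm0' : aa^2 * k 0 ≤ aa^2 := by nlinarith
      have hm1 : 0 ≤ aa^2 * k 1 := mul_nonneg h2p.le hk1a
      have hm1' : aa^2 * k 1 ≤ aa^2 := by nlinarith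
      have hk1 : k 1 = 0 := le_antisymm
        ((mul_le_mul_iff_right₀ h2p).1 (show aa^2 * k 1 ≤ aa^2 * 0 by linarith)) hk1a
      refine memS 39 (by decide) (pt (4 * z 0 - 3) 1) (htopK _ (by linarith) (by linarith)) ?_
      rw [F39_app]
      refine (pt_congr ?_ ?_).trans (pt_eta z).symm
      · rw [pt0]; linarith
      · rw [pt1]; linarith
    by_cases h63 : i = 63
    · subst h63
      have e := (F63_app k).symm.trans hik
      have e0 : 1/4 * k 0 + 1/2 = z 0 := by rw [← e]; exact (pt0 _ _).symm
      have e1 : 1/4 * k 1 + 3/4 = z 1 := by rw [← e]; exact (pt1 _ _).symm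
      have hk1 : k 1 = 0 := by linarith
      refine memS 103 (by decide) (pt (k 0) 1) (htopK _ hk0a hk0b) ?_
      rw [F103_app]
      refine (pt_congr ?_ ?_).trans (pt_eta z).symm
      · rw [pt0]; linarith
      · rw [pt1]; linarith
    by_cases h64 : i = 64
    · subst h64
      have e := (F64_app k).symm.trans hik
      have e0 : 1/4 * k 0 + 1/4 = z 0 := by rw [← e]; exact (pt0 _ _).symm
      have e1 : 1/4 * k 1 + 3/4 = z 1 := by rw [← e]; exact (pt1 _ _).symm
      have hk1 : k 1 = 0 := by linarith
      refine memS 104 (by decide) (pt (k 0) 1) (htopK _ hk0a hk0b) ?_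
      rw [F104_app]
      refine (pt_congr ?_ ?_).trans (pt_eta z).symm
      · rw [pt0]; linarith
      · rw [pt1]; linarith
    by_cases h87 : i = 87
    · subst h87
      have e := (F87_app k).symm.trans hik
      have e0 : aa^2 * k 0 = z 0 := by rw [← e]; exact (pt0 _ _).symm
      have e1 : aa^2 * k 1 + 3/4 = z 1 := by rw [← e]; exact (pt1 _ _).symm
      have h2p : (0:ℝ) < aa^2 := pow_pos hs0 2
      have hm0 : 0 ≤ aa^2 * k 0 := mul_nonneg h2p.le hk0a
      have hm0' : aa^2 * k 0 ≤ aa^2 := by nlinarith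
      have hm1 : 0 ≤ aa^2 * k 1 := mul_nonneg h2p.le hk1a
      have hm1' : aa^2 * k 1 ≤ aa^2 := by nlinarith
      have hk1 : k 1 = 0 := le_antisymm
        ((mul_le_mul_iff_right₀ h2p).1 (show aa^2 * k 1 ≤ aa^2 * 0 by linarith)) hk1a
      refine memS 88 (by decide) (pt (4 * z 0) 1) (htopK _ (by linarith) (by linarith)) ?_
      rw [F88_app']
      refine (pt_congr ?_ ?_).trans (pt_eta z).symm
      · rw [pt0]; linarith
      · rw [pt1]; linarith
    by_cases h90 : i = 90
    · subst h90
      have e := (F90_app k).symm.trans hik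
      have e0 : aa^2 * k 0 = z 0 := by rw [← e]; exact (pt0 _ _).symm
      have e1 : aa^2 * k 1 + (aa + 5/24) = z 1 := by rw [← e]; exact (pt1 _ _).symm
      have h2p : (0:ℝ) < aa^2 := pow_pos hs0 2
      have hm0 : 0 ≤ aa^2 * k 0 := mul_nonneg h2p.le hk0a
      have hm0' : aa^2 * k 0 ≤ aa^2 := by nlinarith
      have hm1 : 0 ≤ aa^2 * k 1 := mul_nonneg h2p.le hk1a
      have hm1' : aa^2 * k 1 ≤ aa^2 := by nlinarith
      have hk1 : k 1 = 1 := le_antisymm hk1b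
        ((mul_le_mul_iff_right₀ h2p).1 (show aa^2 * 1 ≤ aa^2 * k 1 by linarith))
      refine memS 89 (by decide) (pt (4 * z 0) 0) (hbotK _ (by linarith) (by linarith)) ?_
      rw [F89_app']
      refine (pt_congr ?_ ?_).trans (pt_eta z).symm
      · rw [pt0]; linarith
      · rw [pt1]; linarith
    -- generic cases
    by_cases c26 : i ≤ 26
    · exfalso
      have hy := Fq_y hi1 c26 (by omega) (by omega) (hKsq hkK)
      have : z 1 ≤ aa := by rw [← hik, Fmap_le26 c26]; exact hy
      linarith
    · by_cases c50 : i ≤ 50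
      · exfalso
        have e1 : ¬ i ≤ 26 := c26
        have e2 : i ≤ 100 := by omega
        have e3 : (i - 1) / 25 = 1 := by omega
        have hdec : Fmap i k = Γr (Fq (i - 25) (Γr (Γr (Γr k)))) := by
          simp only [Fmap, if_neg e1, if_pos e2, e3]; rfl
        have hk' : Γr (Γr (Γr k)) ∈ unitSq := Γr_mem (Γr_mem (Γr_mem (hKsq hkK)))
        have hz1 : z 1 = (Fq (i - 25) (Γr (Γr (Γr k)))) 0 := by
          rw [← hik, hdec, Γr1]
        by_cases hm11 : i - 25 ≤ 11
        · have := Fq_x_left (by omega) hm11 hk'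
          linarith
        · have := Fq_x_right (m := i - 25) (by omega) (by omega) hk'
          linarith
      · by_cases c75 : i ≤ 75
        · exfalso
          have e1 : ¬ i ≤ 26 := c26
          have e2 : i ≤ 100 := by omega
          have e3 : (i - 1) / 25 = 2 := by omega
          have hdec : Fmap i k = Γr (Γr (Fq (i - 50) (Γr (Γr k)))) := by
            simp only [Fmap, if_neg e1, if_pos e2, e3]; rfl
          have hk' : Γr (Γr k) ∈ unitSq := Γr_mem (Γr_mem (hKsq hkK))
          have hz1 : z 1 = 1 - (Fq (i - 50) (Γr (Γr k))) 1 := by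
            rw [← hik, hdec, Γr1, Γr0]
          have := Fq_y (m := i - 50) (by omega) (by omega) (by omega) (by omega) hk'
          linarith
        · by_cases c100 : i ≤ 100
          · exfalso
            have e1 : ¬ i ≤ 26 := c26
            have e3 : (i - 1) / 25 = 3 := by omega
            have hdec : Fmap i k = Γr (Γr (Γr (Fq (i - 75) (Γr k)))) := by
              simp only [Fmap, if_neg e1, if_pos c100, e3]; rfl
            have hk' : Γr k ∈ unitSq := Γr_mem (hKsq hkK)
            have hz1 : z 1 = 1 - (Fq (i - 75) (Γr k)) 0 := by
              rw [← hik, hdec, Γr1, Γr0, Γr1]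
            by_cases hm11 : i - 75 ≤ 11
            · have := Fq_x_left (by omega) hm11 hk'
              linarith
            · have := Fq_x_right (m := i - 75) (by omega) (by omega) hk'
              linarith
          · omega
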